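/- Let r > 0. Define c₀ = 1 and cₙ = ∏_{k=1}^{n} 2/(1 − 2^k) for n ≥ 1, and let p(x) = ∑_{n=0}^{∞} cₙ e^{−2^{n+1} r x} for x ≥ 0. Then the series converges absolutely for every x ≥ 0, p is differentiable on (0,∞) and satisfies p'(x) = 4r p(2x) − 2r p(x) for all x > 0, p(x) ≥ 0 for all x ≥ 0, and ∫₀^∞ p(x) dx = (1/(2r)) ∏_{n=1}^{∞} (1 − 2^{−n}). Consequently φ(x) = (2r/∏_{n=1}^{∞}(1 − 2^{−n})) p(x) is a probability density on (0,∞), and for every continuously differentiable f with compact support contained in (0,∞), ∫₀^∞ [f'(x) + 2r(f(x/2) − f(x))] φ(x) dx = 0. -/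

import Mathlib

open MeasureTheory

/-- The coefficients `c₀ = 1`, `cₙ = ∏_{k=1}^{n} 2/(1 − 2^k)` of the explicit invariant
density of the TCP process. -/
noncomputable def mitCoef (n : ℕ) : ℝ := ∏ k ∈ Finset.Icc 1 n, 2 / (1 - (2 : ℝ) ^ k)

lemma mitCoef_zero : mitCoef 0 = 1 := by simp [mitCoef]

lemma mitCoef_succ (n : ℕ) :
    mitCoef (n + 1) = mitCoef n * (2 / (1 - (2 : ℝ) ^ (n + 1))) := by
  rw [mitCoef, mitCoef, Finset.prod_Icc_succ_top (by omega : 1 ≤ n + 1)]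

lemma two_pow_big (n : ℕ) : (1 : ℝ) < 2 ^ (n + 1) := by
  have h : (2 : ℝ) ^ (n + 1) ≥ 2 ^ 1 := by
    apply pow_le_pow_right₀ one_le_two (by omega)
  norm_num at h; linarith

lemma mitCoef_rec (n : ℕ) :
    mitCoef (n + 1) * (1 - (2 : ℝ) ^ (n + 1)) = 2 * mitCoef n := by
  have h := two_pow_big n
  have hne : (1:ℝ) - 2^(n+1) ≠ 0 := by linarith
  rw [mitCoef_succ, mul_assoc, div_mul_cancel₀ _ hne]
  ring

lemma abs_mitCoef_succ (n : ℕ) :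
    |mitCoef (n + 1)| = |mitCoef n| * (2 / ((2 : ℝ) ^ (n + 1) - 1)) := by
  have h := two_pow_big n
  rw [mitCoef_succ, abs_mul]
  congr 1
  rw [abs_div, abs_two, abs_of_neg (by linarith : (1 : ℝ) - 2 ^ (n + 1) < 0), neg_sub]

lemma mitCoef_one : mitCoef 1 = -2 := by
  rw [show mitCoef 1 = mitCoef (0+1) from rfl, mitCoef_succ, mitCoef_zero]; norm_num

lemma mitCoef_two : mitCoef 2 = 4 / 3 := by
  rw [show mitCoef 2 = mitCoef (1+1) from rfl, mitCoef_succ, mitCoef_one]; norm_num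

lemma mitCoef_three : mitCoef 3 = -(8 / 21) := by
  rw [show mitCoef 3 = mitCoef (2+1) from rfl, mitCoef_succ, mitCoef_two]; norm_num

lemma abs_mitCoef_le (n : ℕ) : |mitCoef n| ≤ 32 * (4 : ℝ)⁻¹ ^ n := by
  induction n with
  | zero => rw [mitCoef_zero]; norm_num
  | succ n ih =>
    rcases lt_or_ge n 3 with hn | hn
    · interval_cases n
      · rw [show (0:ℕ)+1 = 1 from rfl, mitCoef_one]
        rw [abs_of_nonpos (by norm_num)]; norm_num
      · rw [show (1:ℕ)+1 = 2 from rfl, mitCoef_two]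
        rw [abs_of_nonneg (by norm_num)]; norm_num
      · rw [show (2:ℕ)+1 = 3 from rfl, mitCoef_three]
        rw [abs_of_nonpos (by norm_num)]; norm_num
    · have h9 : (9 : ℝ) ≤ 2 ^ (n + 1) := by
        calc (9 : ℝ) ≤ 2 ^ 4 := by norm_num
        _ ≤ 2 ^ (n + 1) := pow_le_pow_right₀ one_le_two (by omega)
      have hlt : 2 / ((2 : ℝ) ^ (n + 1) - 1) ≤ 4⁻¹ := by
        rw [div_le_iff₀ (by linarith)]; linarith
      calc |mitCoef (n + 1)| = |mitCoef n| * (2 / ((2 : ℝ) ^ (n + 1) - 1)) := abs_mitCoef_succ n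
        _ ≤ 32 * (4 : ℝ)⁻¹ ^ n * 4⁻¹ := by
            apply mul_le_mul ih hlt (div_nonneg (by norm_num) (by linarith)) (by norm_num)
        _ = 32 * (4 : ℝ)⁻¹ ^ (n + 1) := by ring

lemma summable_abs_mitCoef : Summable fun n => |mitCoef n| :=
  Summable.of_nonneg_of_le (fun _ => abs_nonneg _) abs_mitCoef_le
    ((summable_geometric_of_lt_one (by norm_num) (by norm_num)).mul_left 32)

lemma summable_abs_mitCoef_mul_pow : Summable fun n => |mitCoef n| * 2 ^ n := by
  apply Summable.of_nonneg_of_le (fun n => by positivity) (fun n => ?_)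
    (((summable_geometric_of_lt_one (r := (2 : ℝ)⁻¹) (by norm_num) (by norm_num))).mul_left 32)
  calc |mitCoef n| * 2 ^ n ≤ 32 * (4 : ℝ)⁻¹ ^ n * 2 ^ n :=
        mul_le_mul_of_nonneg_right (abs_mitCoef_le n) (by positivity)
    _ = 32 * ((4 : ℝ)⁻¹ * 2) ^ n := by rw [mul_pow, mul_assoc]
    _ = 32 * (2 : ℝ)⁻¹ ^ n := by norm_num

noncomputable def mitG (u : ℝ) : ℝ := ∑' n : ℕ, mitCoef n * u ^ (2 ^ n - 1)

noncomputable def mitG' (u : ℝ) : ℝ :=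
  ∑' n : ℕ, mitCoef n * (((2 ^ n - 1 : ℕ) : ℝ) * u ^ (2 ^ n - 1 - 1))

lemma mitG_term_bound {u : ℝ} (hu : |u| ≤ 1) (n : ℕ) :
    ‖mitCoef n * u ^ (2 ^ n - 1)‖ ≤ |mitCoef n| := by
  rw [Real.norm_eq_abs, abs_mul, abs_pow]
  have : |u| ^ (2 ^ n - 1) ≤ 1 := pow_le_one₀ (abs_nonneg u) hu
  calc |mitCoef n| * |u| ^ (2 ^ n - 1) ≤ |mitCoef n| * 1 :=
        mul_le_mul_of_nonneg_left this (abs_nonneg _)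
    _ = |mitCoef n| := mul_one _

lemma summable_mitG {u : ℝ} (hu : |u| ≤ 1) :
    Summable fun n => mitCoef n * u ^ (2 ^ n - 1) :=
  Summable.of_norm_bounded summable_abs_mitCoef (mitG_term_bound hu)

lemma mitG_deriv_term_bound {u : ℝ} (hu : |u| ≤ 1) (n : ℕ) :
    ‖mitCoef n * (((2 ^ n - 1 : ℕ) : ℝ) * u ^ (2 ^ n - 1 - 1))‖ ≤ |mitCoef n| * 2 ^ n := by
  rw [Real.norm_eq_abs, abs_mul, abs_mul, abs_pow]
  have h1 : |((2 ^ n - 1 : ℕ) : ℝ)| ≤ (2 : ℝ) ^ n := by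
    rw [abs_of_nonneg (by positivity)]
    calc ((2 ^ n - 1 : ℕ) : ℝ) ≤ ((2 ^ n : ℕ) : ℝ) := Nat.cast_le.2 (Nat.sub_le _ _)
      _ = (2 : ℝ) ^ n := by push_cast; ring
  have h2 : |u| ^ (2 ^ n - 1 - 1) ≤ 1 := pow_le_one₀ (abs_nonneg u) hu
  calc |mitCoef n| * (|((2 ^ n - 1 : ℕ) : ℝ)| * |u| ^ (2 ^ n - 1 - 1))
      ≤ |mitCoef n| * ((2 : ℝ) ^ n * 1) := by
        apply mul_le_mul_of_nonneg_left _ (abs_nonneg _)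
        exact mul_le_mul h1 h2 (by positivity) (by positivity)
    _ = |mitCoef n| * 2 ^ n := by ring

lemma mitG_continuousOn : ContinuousOn mitG (Set.Icc (-1 : ℝ) 1) := by
  apply continuousOn_tsum (fun i => (continuous_const.mul (continuous_pow _)).continuousOn)
    summable_abs_mitCoef
  intro n x hx
  exact mitG_term_bound (abs_le.2 ⟨hx.1, hx.2⟩) n

lemma mitG_hasDerivAt {u : ℝ} (hu : u ∈ Set.Ioo (-1 : ℝ) 1) : HasDerivAt mitG (mitG' u) u := by
  apply hasDerivAt_tsum_of_isPreconnected (u := fun n => |mitCoef n| * 2 ^ n)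
    (g := fun n u => mitCoef n * u ^ (2 ^ n - 1))
    (g' := fun n u => mitCoef n * (((2 ^ n - 1 : ℕ) : ℝ) * u ^ (2 ^ n - 1 - 1)))
    summable_abs_mitCoef_mul_pow isOpen_Ioo (convex_Ioo _ _).isPreconnected
    (fun n y _ => (hasDerivAt_pow _ y).const_mul _)
    (fun n y hy => mitG_deriv_term_bound (by rw [abs_le]; exact ⟨hy.1.le, hy.2.le⟩) n)
    (Set.mem_Ioo.2 ⟨by norm_num, by norm_num⟩ : (0 : ℝ) ∈ Set.Ioo (-1 : ℝ) 1)
    (summable_mitG (by norm_num)) hu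

lemma mitG'_eq {u : ℝ} (hu : |u| ≤ 1) : mitG' u = -2 * mitG (u ^ 2) := by
  have hsq : |u ^ 2| ≤ 1 := by
    rw [abs_pow]; exact pow_le_one₀ (abs_nonneg u) hu
  have hsum : Summable fun n => mitCoef n * (((2 ^ n - 1 : ℕ) : ℝ) * u ^ (2 ^ n - 1 - 1)) :=
    Summable.of_norm_bounded summable_abs_mitCoef_mul_pow (mitG_deriv_term_bound hu)
  rw [mitG', hsum.tsum_eq_zero_add]
  have h0 : mitCoef 0 * (((2 ^ 0 - 1 : ℕ) : ℝ) * u ^ (2 ^ 0 - 1 - 1)) = 0 := by norm_num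
  rw [h0, zero_add, mitG, ← tsum_mul_left]
  apply tsum_congr
  intro n
  have h1 : (1 : ℕ) ≤ 2 ^ n := Nat.one_le_two_pow
  have h1' : (1 : ℕ) ≤ 2 ^ (n + 1) := Nat.one_le_two_pow
  have hk : ((2 ^ (n + 1) - 1 : ℕ) : ℝ) = 2 ^ (n + 1) - 1 := by
    push_cast [h1']; ring
  have hrec : mitCoef (n + 1) * ((2 : ℝ) ^ (n + 1) - 1) = -2 * mitCoef n := by
    have := mitCoef_rec n; nlinarith [this]
  have hexp : (u ^ 2) ^ (2 ^ n - 1) = u ^ (2 ^ (n + 1) - 1 - 1) := by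
    rw [← pow_mul]
    congr 1
    have h2 : 2 ^ (n + 1) = 2 * 2 ^ n := by ring
    omega
  rw [hk, hexp]
  linear_combination u ^ (2 ^ (n + 1) - 1 - 1) * hrec

lemma mitG_zero : mitG 0 = 1 := by
  rw [mitG, tsum_eq_single 0]
  · norm_num [mitCoef_zero]
  · intro n hn
    have h2 : 1 ≤ 2 ^ n - 1 := by
      have : 2 ≤ 2 ^ n := by
        calc 2 = 2 ^ 1 := rfl
        _ ≤ 2 ^ n := Nat.pow_le_pow_right (by norm_num) (by omega)
      omega
    rw [zero_pow (by omega : 2 ^ n - 1 ≠ 0), mul_zero]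

noncomputable def mitA (w : ℝ) : ℝ := ∑' n : ℕ, mitCoef n * (w / 2) ^ n

lemma summable_mitA {w : ℝ} (hw : |w| ≤ 2) :
    Summable fun n => mitCoef n * (w / 2) ^ n := by
  apply Summable.of_norm_bounded summable_abs_mitCoef
  intro n
  rw [Real.norm_eq_abs, abs_mul, abs_pow]
  have h1 : |w / 2| ≤ 1 := by rw [abs_div, abs_two]; linarith
  calc |mitCoef n| * |w / 2| ^ n ≤ |mitCoef n| * 1 :=
        mul_le_mul_of_nonneg_left (pow_le_one₀ (abs_nonneg _) h1) (abs_nonneg _)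
    _ = |mitCoef n| := mul_one _

lemma mitA_funEq {w : ℝ} (hw : |w| ≤ 2) : mitA w = (1 - w / 2) * mitA (w / 2) := by
  set q : ℝ := w / 2 with hq
  have hq1 : |q| ≤ 1 := by rw [hq, abs_div, abs_two]; linarith
  have hq2 : |q| ≤ 2 := by linarith
  have ha : Summable fun n => mitCoef n * (q / 2) ^ n := summable_mitA (by rwa [hq] at hq2)
  have hb : Summable fun n => q * (mitCoef n * (q / 2) ^ n) := ha.mul_left q
  set b' : ℕ → ℝ := fun n => if n = 0 then 0 else q * (mitCoef (n - 1) * (q / 2) ^ (n - 1))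
    with hb'def
  have hb'succ : ∀ n, b' (n + 1) = q * (mitCoef n * (q / 2) ^ n) := by
    intro n; simp [hb'def]
  have hb'0 : b' 0 = 0 := by simp [hb'def]
  have hsb' : Summable b' := by
    apply (summable_nat_add_iff 1).mp
    simp only [hb'succ]
    exact hb
  have key : ∀ n, mitCoef n * q ^ n = mitCoef n * (q / 2) ^ n - b' n := by
    intro n
    cases n with
    | zero => simp [hb'0]
    | succ n =>
      rw [hb'succ]
      have hrec := mitCoef_rec n
      have e2 : (q / 2) ^ n * 2 ^ n = q ^ n := by
        rw [div_pow]; field_simp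
      linear_combination (-(q * (q / 2) ^ n) / 2) * hrec + (-(mitCoef (n + 1) * q)) * e2
  have hsplit : mitA w = ∑' n, (mitCoef n * (q / 2) ^ n - b' n) := by
    rw [mitA]
    exact tsum_congr key
  rw [hsplit, ha.tsum_sub hsb']
  have hb'sum : ∑' n, b' n = q * mitA q := by
    rw [hsb'.tsum_eq_zero_add, hb'0, zero_add]
    simp only [hb'succ]
    rw [tsum_mul_left]
    rfl
  rw [hb'sum]
  have : (∑' n, mitCoef n * (q / 2) ^ n) = mitA q := rfl
  rw [this]
  ring

lemma mitA_two : mitA 2 = 0 := by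
  have h := mitA_funEq (w := 2) (by norm_num)
  norm_num at h
  exact h

lemma mitG_one : mitG 1 = 0 := by
  have h : mitG 1 = mitA 2 := by
    rw [mitG, mitA]
    apply tsum_congr
    intro n
    norm_num
  rw [h, mitA_two]

lemma mitA_chain (N : ℕ) :
    mitA 1 = (∏ k ∈ Finset.range N, (1 - (2 : ℝ)⁻¹ ^ (k + 1))) * mitA ((2 : ℝ)⁻¹ ^ N) := by
  induction N with
  | zero => simp
  | succ N ih =>
    rw [ih, Finset.prod_range_succ]
    have h1 : |(2 : ℝ)⁻¹ ^ N| ≤ 2 := by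
      rw [abs_of_nonneg (by positivity)]
      calc (2 : ℝ)⁻¹ ^ N ≤ 1 := pow_le_one₀ (by norm_num) (by norm_num)
        _ ≤ 2 := by norm_num
    rw [mitA_funEq h1]
    have h2 : (2 : ℝ)⁻¹ ^ N / 2 = 2⁻¹ ^ (N + 1) := by rw [pow_succ]; ring
    rw [h2]
    ring

lemma mitA_sub_one {w : ℝ} (hw : |w| ≤ 1) : |mitA w - 1| ≤ 32 * |w| := by
  have hs : Summable fun n => mitCoef n * (w / 2) ^ n := summable_mitA (by linarith)
  rw [mitA, hs.tsum_eq_zero_add]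
  have h0 : mitCoef 0 * (w / 2) ^ 0 = 1 := by rw [mitCoef_zero]; norm_num
  rw [h0]
  have hshape : (1 : ℝ) + (∑' n, mitCoef (n + 1) * (w / 2) ^ (n + 1)) - 1
      = ∑' n, mitCoef (n + 1) * (w / 2) ^ (n + 1) := by ring
  rw [hshape]
  have hgeo : HasSum (fun n : ℕ => 4 * |w| * (8 : ℝ)⁻¹ ^ n) (4 * |w| * (1 - 8⁻¹)⁻¹) :=
    (hasSum_geometric_of_lt_one (by norm_num) (by norm_num)).mul_left _
  have hbound : ∀ n : ℕ, ‖mitCoef (n + 1) * (w / 2) ^ (n + 1)‖ ≤ 4 * |w| * (8 : ℝ)⁻¹ ^ n := by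
    intro n
    rw [Real.norm_eq_abs, abs_mul, abs_pow]
    have h1 : |w / 2| ^ (n + 1) ≤ |w| / 2 * (2 : ℝ)⁻¹ ^ n := by
      rw [abs_div, abs_two, pow_succ']
      apply mul_le_mul_of_nonneg_left _ (by positivity)
      exact pow_le_pow_left₀ (by positivity) (by linarith) n
    calc |mitCoef (n + 1)| * |w / 2| ^ (n + 1)
        ≤ (32 * (4 : ℝ)⁻¹ ^ (n + 1)) * (|w| / 2 * (2 : ℝ)⁻¹ ^ n) := by
          apply mul_le_mul (abs_mitCoef_le (n + 1)) h1 (by positivity) (by positivity)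
      _ = 4 * |w| * ((4 : ℝ)⁻¹ * 2⁻¹) ^ n := by rw [mul_pow]; ring
      _ = 4 * |w| * (8 : ℝ)⁻¹ ^ n := by norm_num
  have := tsum_of_norm_bounded hgeo hbound
  calc |∑' n, mitCoef (n + 1) * (w / 2) ^ (n + 1)| ≤ 4 * |w| * (1 - 8⁻¹)⁻¹ := this
    _ ≤ 32 * |w| := by rw [show ((1:ℝ) - 8⁻¹)⁻¹ = 8/7 by norm_num]; nlinarith [abs_nonneg w]

lemma tendsto_mitA_pow :
    Filter.Tendsto (fun N => mitA ((2 : ℝ)⁻¹ ^ N)) Filter.atTop (nhds 1) := by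
  have h : ∀ N : ℕ, ‖mitA ((2 : ℝ)⁻¹ ^ N) - 1‖ ≤ 32 * (2 : ℝ)⁻¹ ^ N := by
    intro N
    rw [Real.norm_eq_abs]
    have := mitA_sub_one (w := (2 : ℝ)⁻¹ ^ N)
      (by rw [abs_of_nonneg (by positivity)]; exact pow_le_one₀ (by norm_num) (by norm_num))
    rwa [abs_of_nonneg (by positivity : (0:ℝ) ≤ (2 : ℝ)⁻¹ ^ N)] at this
  have h2 : Filter.Tendsto (fun N : ℕ => 32 * (2 : ℝ)⁻¹ ^ N) Filter.atTop (nhds 0) := by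
    simpa using (tendsto_pow_atTop_nhds_zero_of_lt_one (by norm_num : (0:ℝ) ≤ 2⁻¹)
      (by norm_num)).const_mul (32 : ℝ)
  have h3 := squeeze_zero_norm h h2
  have h4 := h3.add_const 1
  simpa using h4

lemma log_one_sub_bound {t : ℝ} (h0 : 0 < t) (h1 : t ≤ 1 / 2) :
    |Real.log (1 - t)| ≤ 2 * t := by
  have hpos : 0 < 1 - t := by linarith
  have h2 : Real.log (1 - t) ≤ 0 := Real.log_nonpos (by linarith) (by linarith)
  rw [abs_of_nonpos h2, ← Real.log_inv]
  have h3 := Real.log_le_sub_one_of_pos (inv_pos.2 hpos)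
  have hub : (1 - t)⁻¹ - 1 ≤ 2 * t := by
    rw [inv_eq_one_div, div_sub' hpos.ne', div_le_iff₀ hpos]
    nlinarith
  linarith

lemma multipliable_mit : Multipliable fun n : ℕ => (1 - (2 : ℝ)⁻¹ ^ (n + 1)) := by
  have hpos : ∀ (_ : Unit) (n : ℕ), 0 < 1 - (2 : ℝ)⁻¹ ^ (n + 1) := by
    intro _ n
    have : (2 : ℝ)⁻¹ ^ (n + 1) < 1 := pow_lt_one₀ (by norm_num) (by norm_num) (by omega)
    linarith
  have hsum : ∀ (_ : Unit), Summable fun n : ℕ => Real.log (1 - (2 : ℝ)⁻¹ ^ (n + 1)) := by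
    intro _
    apply Summable.of_norm_bounded
      (summable_geometric_of_lt_one (r := (2 : ℝ)⁻¹) (by norm_num) (by norm_num))
    intro n
    rw [Real.norm_eq_abs]
    have hb := log_one_sub_bound (t := (2 : ℝ)⁻¹ ^ (n + 1)) (by positivity)
      (by rw [pow_succ']
          calc (2:ℝ)⁻¹ * 2⁻¹ ^ n ≤ 2⁻¹ * 1 :=
            mul_le_mul_of_nonneg_left (pow_le_one₀ (by norm_num) (by norm_num)) (by norm_num)
          _ = 1/2 := by norm_num)
    calc |Real.log (1 - (2 : ℝ)⁻¹ ^ (n + 1))| ≤ 2 * (2 : ℝ)⁻¹ ^ (n + 1) := hb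
      _ = (2 : ℝ)⁻¹ ^ n := by rw [pow_succ']; ring
  exact Real.multipliable_of_summable_log (hpos ()) (hsum ())

lemma tprod_eq_mitA_one : (∏' n : ℕ, (1 - (2 : ℝ)⁻¹ ^ (n + 1))) = mitA 1 := by
  have h1 := multipliable_mit.hasProd.tendsto_prod_nat
  have h3 := tendsto_mitA_pow
  have hne : ∀ᶠ N in Filter.atTop, mitA ((2 : ℝ)⁻¹ ^ N) ≠ 0 := h3.eventually_ne one_ne_zero
  have h4 : Filter.Tendsto (fun N => mitA 1 / mitA ((2 : ℝ)⁻¹ ^ N)) Filter.atTop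
      (nhds (mitA 1 / 1)) := Filter.Tendsto.div tendsto_const_nhds h3 one_ne_zero
  have h5 : Filter.Tendsto (fun N => ∏ k ∈ Finset.range N, (1 - (2 : ℝ)⁻¹ ^ (k + 1)))
      Filter.atTop (nhds (mitA 1)) := by
    rw [show mitA 1 = mitA 1 / 1 by ring]
    apply h4.congr'
    filter_upwards [hne] with N hN
    rw [mitA_chain N]
    exact mul_div_cancel_right₀ _ hN
  exact tendsto_nhds_unique h1 h5

lemma mitA_one_pos : 0 < mitA 1 := by
  have h6 := mitA_chain 6
  have hA6 := mitA_sub_one (w := (2 : ℝ)⁻¹ ^ 6)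
    (by rw [abs_of_nonneg (by positivity)]; exact pow_le_one₀ (by norm_num) (by norm_num))
  have habs : |(2 : ℝ)⁻¹ ^ 6| = (2 : ℝ)⁻¹ ^ 6 := abs_of_nonneg (by positivity)
  rw [habs] at hA6
  have hge : (1 : ℝ) / 2 ≤ mitA ((2 : ℝ)⁻¹ ^ 6) := by
    have := (abs_le.1 hA6).1
    norm_num at this ⊢
    linarith
  rw [h6]
  apply mul_pos _ (by linarith)
  apply Finset.prod_pos
  intro k _
  have : (2 : ℝ)⁻¹ ^ (k + 1) < 1 := pow_lt_one₀ (by norm_num) (by norm_num) (by omega)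
  linarith

lemma tprod_mit_pos : 0 < ∏' n : ℕ, (1 - (2 : ℝ)⁻¹ ^ (n + 1)) := by
  rw [tprod_eq_mitA_one]; exact mitA_one_pos

/-- The (unnormalized) invariant density `p(x) = ∑ₙ cₙ e^{−2^{n+1} r x}` of the TCP
process with constant rate `r`. -/
noncomputable def mitDensity (r x : ℝ) : ℝ :=
  ∑' n : ℕ, mitCoef n * Real.exp (-(2 ^ (n + 1) * r * x))

lemma mitDensity_eq (r x : ℝ) :
    mitDensity r x = Real.exp (-(2 * r * x)) * mitG (Real.exp (-(2 * r * x))) := by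
  rw [mitDensity, mitG, ← tsum_mul_left]
  apply tsum_congr
  intro n
  have h1 : Real.exp (-(2 ^ (n + 1) * r * x)) = Real.exp (-(2 * r * x)) ^ (2 ^ n : ℕ) := by
    rw [← Real.exp_nat_mul]
    congr 1
    push_cast
    ring
  have h2 : Real.exp (-(2 * r * x)) ^ (2 ^ n : ℕ)
      = Real.exp (-(2 * r * x)) * Real.exp (-(2 * r * x)) ^ (2 ^ n - 1) := by
    conv_lhs => rw [← Nat.sub_add_cancel (Nat.one_le_two_pow (n := n))]
    rw [pow_succ]
    ring
  rw [h1, h2]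
  ring

lemma mitDensity_hasDerivAt {r x : ℝ} (hr : 0 < r) (hx : 0 < x) :
    HasDerivAt (mitDensity r)
      (4 * r * mitDensity r (2 * x) - 2 * r * mitDensity r x) x := by
  have hEx_pos : (0:ℝ) < Real.exp (-(2 * r * x)) := Real.exp_pos _
  have hEx_lt : Real.exp (-(2 * r * x)) < 1 := by
    rw [Real.exp_lt_one_iff]
    nlinarith
  have h1 : HasDerivAt (fun y : ℝ => -(2 * r * y)) (-(2 * r)) x := by
    have h := (hasDerivAt_id x).const_mul (-(2 * r))
    simp only [mul_one, id_eq] at h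
    rw [show (fun y : ℝ => -(2 * r * y)) = (fun y : ℝ => -(2 * r) * y) from
      funext fun y => by ring]
    exact h
  have hder_E : HasDerivAt (fun y : ℝ => Real.exp (-(2 * r * y)))
      (Real.exp (-(2 * r * x)) * (-(2 * r))) x := h1.exp
  have hG := mitG_hasDerivAt (u := Real.exp (-(2 * r * x))) ⟨by linarith, hEx_lt⟩
  have hcomp : HasDerivAt (fun y : ℝ => mitG (Real.exp (-(2 * r * y))))
      (mitG' (Real.exp (-(2 * r * x))) * (Real.exp (-(2 * r * x)) * (-(2 * r)))) x :=
    by have := hG.comp x hder_E; exact this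
  have hprod := hder_E.mul hcomp
  have heq : mitDensity r = fun y => Real.exp (-(2 * r * y)) * mitG (Real.exp (-(2 * r * y))) :=
    funext fun y => mitDensity_eq r y
  rw [heq]
  refine HasDerivAt.congr_deriv hprod ?_
  rw [mitG'_eq (by rw [abs_of_pos hEx_pos]; exact hEx_lt.le)]
  have hsq : Real.exp (-(2 * r * (2 * x))) = Real.exp (-(2 * r * x)) ^ 2 := by
    rw [pow_two, ← Real.exp_add, Real.exp_eq_exp]
    ring
  simp only [hsq]
  ring

lemma mitG_contOn_unit : ContinuousOn mitG (Set.Ioo (-1 : ℝ) 1) :=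
  fun y hy => (mitG_hasDerivAt hy).continuousAt.continuousWithinAt

lemma mitG_integral_id {u : ℝ} (hu : u ∈ Set.Ioo (0 : ℝ) 1) :
    u * mitG u = ∫ s in (u ^ 2)..u, mitG s := by
  set Ψ : ℝ → ℝ := fun y => ∫ s in (1/2 : ℝ)..y, mitG s with hΨ
  have hmemIoo : ∀ {y : ℝ}, y ∈ Set.Ioo (0:ℝ) 1 → y ∈ Set.Ioo (-1:ℝ) 1 := by
    rintro y ⟨h1, h2⟩; exact ⟨by linarith, h2⟩
  have hInt : ∀ {y z : ℝ}, y ∈ Set.Ioo (0:ℝ) 1 → z ∈ Set.Ioo (0:ℝ) 1 →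
      IntervalIntegrable mitG volume y z := by
    intro y z hy hz
    apply ContinuousOn.intervalIntegrable
    apply mitG_contOn_unit.mono
    exact Set.OrdConnected.uIcc_subset Set.ordConnected_Ioo (hmemIoo hy) (hmemIoo hz)
  have hhalf : (1/2 : ℝ) ∈ Set.Ioo (0:ℝ) 1 := by norm_num
  have hΨder : ∀ {y : ℝ}, y ∈ Set.Ioo (0:ℝ) 1 → HasDerivAt Ψ (mitG y) y := by
    intro y hy
    apply intervalIntegral.integral_hasDerivAt_right (hInt hhalf hy)
    · exact (mitG_contOn_unit.stronglyMeasurableAtFilter isOpen_Ioo y (hmemIoo hy))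
    · exact (mitG_hasDerivAt (hmemIoo hy)).continuousAt
  -- Θ is constant on (0,1)
  have hΘder : ∀ {y : ℝ}, y ∈ Set.Ioo (0:ℝ) 1 →
      HasDerivAt (fun v => v * mitG v - (Ψ v - Ψ (v ^ 2))) 0 y := by
    intro y hy
    have hy2 : y ^ 2 ∈ Set.Ioo (0:ℝ) 1 := by
      constructor
      · exact pow_pos hy.1 2
      · nlinarith [hy.1, hy.2]
    have hsq : HasDerivAt (fun v : ℝ => v ^ 2) (((2 : ℕ) : ℝ) * y ^ (2 - 1)) y :=
      hasDerivAt_pow 2 y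
    have hΨ2 : HasDerivAt (fun v => Ψ (v ^ 2)) (mitG (y ^ 2) * (((2 : ℕ) : ℝ) * y ^ (2 - 1))) y :=
      HasDerivAt.comp (h := fun v : ℝ => v ^ 2) (h₂ := Ψ) (x := y) (hΨder hy2) hsq
    have hmul : HasDerivAt (fun v => v * mitG v) (1 * mitG y + y * mitG' y) y :=
      (hasDerivAt_id y).mul (mitG_hasDerivAt (hmemIoo hy))
    have htot := (hmul.sub ((hΨder hy).sub hΨ2))
    refine HasDerivAt.congr_deriv htot ?_
    rw [mitG'_eq (by rw [abs_of_pos hy.1]; exact hy.2.le)]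
    push_cast
    ring
  -- constancy: for u v in (0,1), Θ u = Θ v
  have hconst : ∀ {y z : ℝ}, y ∈ Set.Ioo (0:ℝ) 1 → z ∈ Set.Ioo (0:ℝ) 1 →
      (y * mitG y - (Ψ y - Ψ (y ^ 2))) = (z * mitG z - (Ψ z - Ψ (z ^ 2))) := by
    intro y z hy hz
    have h0 : ∫ t in y..z, (0:ℝ) = (fun v => v * mitG v - (Ψ v - Ψ (v ^ 2))) z -
        (fun v => v * mitG v - (Ψ v - Ψ (v ^ 2))) y := by
      apply intervalIntegral.integral_eq_sub_of_hasDerivAt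
      · intro t ht
        apply hΘder
        have := Set.OrdConnected.uIcc_subset Set.ordConnected_Ioo hy hz ht
        exact this
      · simp [intervalIntegrable_const]
    simp only [intervalIntegral.integral_zero] at h0
    linarith [h0]
  -- limit of Θ at 1 within (0,1) is 0
  obtain ⟨M, hM⟩ : ∃ M : ℝ, ∀ s ∈ Set.Icc (-1:ℝ) 1, ‖mitG s‖ ≤ M :=
    (isCompact_Icc (a := (-1:ℝ)) (b := 1)).exists_bound_of_continuousOn mitG_continuousOn
  have hfilter : Filter.NeBot (nhdsWithin (1:ℝ) (Set.Ioo (0:ℝ) 1)) := by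
    rw [← mem_closure_iff_nhdsWithin_neBot, closure_Ioo (by norm_num : (0:ℝ) ≠ 1)]
    exact ⟨by norm_num, le_refl 1⟩
  have hle : nhdsWithin (1:ℝ) (Set.Ioo (0:ℝ) 1) ≤ nhdsWithin (1:ℝ) (Set.Icc (-1:ℝ) 1) :=
    nhdsWithin_mono 1 (fun z hz => ⟨by linarith [hz.1], hz.2.le⟩)
  have hlim1 : Filter.Tendsto (fun v : ℝ => v * mitG v)
      (nhdsWithin (1:ℝ) (Set.Ioo (0:ℝ) 1)) (nhds 0) := by
    have hG1 : Filter.Tendsto mitG (nhdsWithin (1:ℝ) (Set.Ioo (0:ℝ) 1)) (nhds (mitG 1)) :=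
      (mitG_continuousOn.continuousWithinAt (by constructor <;> norm_num)).mono_left hle
    have hid : Filter.Tendsto (fun v : ℝ => v)
        (nhdsWithin (1:ℝ) (Set.Ioo (0:ℝ) 1)) (nhds 1) :=
      Filter.Tendsto.mono_left (continuous_id.tendsto 1) nhdsWithin_le_nhds
    have := hid.mul hG1
    rw [mitG_one, mul_zero] at this
    exact this
  have hIntEq : ∀ {v : ℝ}, v ∈ Set.Ioo (0:ℝ) 1 → Ψ v - Ψ (v ^ 2) = ∫ s in (v ^ 2)..v, mitG s := by
    intro v hv
    have hv2 : v ^ 2 ∈ Set.Ioo (0:ℝ) 1 := ⟨pow_pos hv.1 2, by nlinarith [hv.1, hv.2]⟩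
    exact intervalIntegral.integral_interval_sub_left (hInt hhalf hv) (hInt hhalf hv2)
  have hlim2 : Filter.Tendsto (fun v : ℝ => Ψ v - Ψ (v ^ 2))
      (nhdsWithin (1:ℝ) (Set.Ioo (0:ℝ) 1)) (nhds 0) := by
    have hbnd : ∀ v ∈ Set.Ioo (0:ℝ) 1, ‖Ψ v - Ψ (v ^ 2)‖ ≤ M * |v - v ^ 2| := by
      intro v hv
      rw [hIntEq hv]
      apply intervalIntegral.norm_integral_le_of_norm_le_const
      intro s hs
      apply hM
      have hv2 : (0:ℝ) < v ^ 2 := pow_pos hv.1 2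
      have h : v ^ 2 ≤ v := by nlinarith [hv.1, hv.2]
      rw [Set.uIoc_of_le h] at hs
      exact ⟨by linarith [hs.1], by linarith [hs.2, hv.2.le]⟩
    have hg : Filter.Tendsto (fun v : ℝ => M * |v - v ^ 2|)
        (nhdsWithin (1:ℝ) (Set.Ioo (0:ℝ) 1)) (nhds 0) := by
      have hc : Continuous (fun v : ℝ => M * |v - v ^ 2|) := by continuity
      have h10 : M * |(1:ℝ) - 1 ^ 2| = 0 := by norm_num
      have := Filter.Tendsto.mono_left (hc.tendsto 1)
        (nhdsWithin_le_nhds (s := Set.Ioo (0:ℝ) 1) (a := (1:ℝ)))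
      rwa [h10] at this
    apply squeeze_zero_norm' _ hg
    filter_upwards [self_mem_nhdsWithin] with v hv using hbnd v hv
  have hlimΘ : Filter.Tendsto (fun v : ℝ => v * mitG v - (Ψ v - Ψ (v ^ 2)))
      (nhdsWithin (1:ℝ) (Set.Ioo (0:ℝ) 1)) (nhds 0) := by
    have := hlim1.sub hlim2
    rwa [sub_zero] at this
  have hlimC : Filter.Tendsto (fun v : ℝ => v * mitG v - (Ψ v - Ψ (v ^ 2)))
      (nhdsWithin (1:ℝ) (Set.Ioo (0:ℝ) 1)) (nhds (u * mitG u - (Ψ u - Ψ (u ^ 2)))) := by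
    apply Filter.Tendsto.congr' _ tendsto_const_nhds
    filter_upwards [self_mem_nhdsWithin] with v hv
    exact hconst hu hv
  have h0 : u * mitG u - (Ψ u - Ψ (u ^ 2)) = 0 := tendsto_nhds_unique hlimC hlimΘ
  rw [← hIntEq hu]
  linarith [h0]

lemma mitG_nonneg : ∀ u ∈ Set.Icc (0:ℝ) 1, 0 ≤ mitG u := by
  by_contra hcon
  push_neg at hcon
  obtain ⟨w, hw, hwneg⟩ := hcon
  set Z : Set ℝ := {v | v ∈ Set.Icc (0:ℝ) 1 ∧ mitG v ≤ 0} with hZ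
  have hZclosed : IsClosed Z := by
    have : Z = Set.Icc (0:ℝ) 1 ∩ mitG ⁻¹' (Set.Iic 0) := rfl
    rw [this]
    apply ContinuousOn.preimage_isClosed_of_isClosed
      (mitG_continuousOn.mono (fun z hz => ⟨by linarith [hz.1], hz.2⟩))
      isClosed_Icc isClosed_Iic
  have hZne : Z.Nonempty := ⟨w, hw, hwneg.le⟩
  have hZbdd : BddBelow Z := ⟨0, fun z hz => hz.1.1⟩
  set u₀ : ℝ := sInf Z with hu₀
  have hu₀Z : u₀ ∈ Z := hZclosed.csInf_mem hZne hZbdd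
  have hu₀Icc : u₀ ∈ Set.Icc (0:ℝ) 1 := hu₀Z.1
  have hG0 : mitG u₀ ≤ 0 := hu₀Z.2
  have hu₀ne0 : u₀ ≠ 0 := by
    intro h
    rw [h, mitG_zero] at hG0
    linarith
  have hu₀pos : 0 < u₀ := lt_of_le_of_ne hu₀Icc.1 (Ne.symm hu₀ne0)
  have hu₀ne1 : u₀ ≠ 1 := by
    intro h
    -- then w ∈ Z with w ≥ u₀ = 1 and w ≤ 1 so w = 1; but mitG 1 = 0 > mitG w
    have hwge : u₀ ≤ w := csInf_le hZbdd ⟨hw, hwneg.le⟩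
    have : w = 1 := le_antisymm hw.2 (h ▸ hwge)
    rw [this, mitG_one] at hwneg
    linarith
  have hu₀lt1 : u₀ < 1 := lt_of_le_of_ne hu₀Icc.2 hu₀ne1
  have hpos_below : ∀ v, 0 ≤ v → v < u₀ → 0 < mitG v := by
    intro v hv0 hvlt
    by_contra hnp
    push_neg at hnp
    have : v ∈ Z := ⟨⟨hv0, by linarith⟩, hnp⟩
    have := csInf_le hZbdd this
    linarith
  have hid := mitG_integral_id (u := u₀) ⟨hu₀pos, hu₀lt1⟩
  have hu₀sq : u₀ ^ 2 < u₀ := by nlinarith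
  have hIpos : 0 < ∫ s in (u₀ ^ 2)..u₀, mitG s := by
    apply intervalIntegral.intervalIntegral_pos_of_pos_on
    · apply ContinuousOn.intervalIntegrable
      apply mitG_contOn_unit.mono
      apply Set.OrdConnected.uIcc_subset Set.ordConnected_Ioo
      · exact ⟨by nlinarith, by nlinarith⟩
      · exact ⟨by linarith, hu₀lt1⟩
    · intro s hs
      exact hpos_below s (by nlinarith [hs.1]) hs.2
    · exact hu₀sq
  nlinarith [hid, hIpos, mul_nonpos_of_nonneg_of_nonpos hu₀pos.le hG0]

lemma mitDensity_nonneg {r x : ℝ} (hr : 0 < r) (hx : 0 ≤ x) : 0 ≤ mitDensity r x := by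
  rw [mitDensity_eq]
  have hE0 : (0:ℝ) < Real.exp (-(2 * r * x)) := Real.exp_pos _
  have hE1 : Real.exp (-(2 * r * x)) ≤ 1 := by
    rw [Real.exp_le_one_iff]
    nlinarith
  exact mul_nonneg hE0.le (mitG_nonneg _ ⟨hE0.le, hE1⟩)

lemma exp_integral_Ioi {b : ℝ} (hb : 0 < b) :
    ∫ x in Set.Ioi (0:ℝ), Real.exp (-(b * x)) = b⁻¹ := by
  have h := integral_comp_mul_left_Ioi (fun y => Real.exp (-y)) 0 hb
  simp only [mul_zero] at h
  rw [integral_exp_neg_Ioi] at h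
  simp only [neg_zero, Real.exp_zero, smul_eq_mul, mul_one] at h
  rw [show (fun x : ℝ => Real.exp (-(b * x))) = fun x : ℝ => Real.exp (-(b * x)) from rfl]
  exact h

lemma mitTerm_integrable (r : ℝ) (hr : 0 < r) (n : ℕ) :
    IntegrableOn (fun x => mitCoef n * Real.exp (-(2 ^ (n + 1) * r * x))) (Set.Ioi (0:ℝ)) := by
  have hb : (0:ℝ) < 2 ^ (n + 1) * r := by positivity
  have h := exp_neg_integrableOn_Ioi 0 hb
  have heq : (fun x : ℝ => Real.exp (-(2 ^ (n + 1) * r * x)))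
      = fun x : ℝ => Real.exp (-(2 ^ (n + 1) * r) * x) :=
    funext fun x => by rw [neg_mul, mul_assoc]
  have h2 : IntegrableOn (fun x : ℝ => Real.exp (-(2 ^ (n + 1) * r * x))) (Set.Ioi 0) := by
    rw [heq]; exact h
  exact h2.const_mul _

lemma mitTerm_integral (r : ℝ) (hr : 0 < r) (n : ℕ) :
    ∫ x in Set.Ioi (0:ℝ), mitCoef n * Real.exp (-(2 ^ (n + 1) * r * x))
      = mitCoef n * (2 ^ (n + 1) * r)⁻¹ := by
  rw [MeasureTheory.integral_const_mul, exp_integral_Ioi (by positivity)]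

lemma mitTerm_norm_integral (r : ℝ) (hr : 0 < r) (n : ℕ) :
    ∫ x in Set.Ioi (0:ℝ), ‖mitCoef n * Real.exp (-(2 ^ (n + 1) * r * x))‖
      = |mitCoef n| * (2 ^ (n + 1) * r)⁻¹ := by
  have heq : (fun x : ℝ => ‖mitCoef n * Real.exp (-(2 ^ (n + 1) * r * x))‖)
      = fun x : ℝ => |mitCoef n| * Real.exp (-(2 ^ (n + 1) * r * x)) := by
    funext x
    rw [Real.norm_eq_abs, abs_mul, abs_of_pos (Real.exp_pos _)]
  rw [heq, MeasureTheory.integral_const_mul, exp_integral_Ioi (by positivity)]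

lemma mitDensity_integral (r : ℝ) (hr : 0 < r) :
    ∫ x in Set.Ioi (0:ℝ), mitDensity r x = 1 / (2 * r) * mitA 1 := by
  have hsum : Summable fun n : ℕ =>
      ∫ x in Set.Ioi (0:ℝ), ‖mitCoef n * Real.exp (-(2 ^ (n + 1) * r * x))‖ := by
    apply Summable.of_nonneg_of_le
      (fun n => integral_nonneg fun x => norm_nonneg _)
      (fun n => ?_) (summable_abs_mitCoef.mul_right (2 * r)⁻¹)
    rw [mitTerm_norm_integral r hr n]
    apply mul_le_mul_of_nonneg_left _ (abs_nonneg _)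
    apply inv_anti₀ (by positivity)
    have h2 : (2:ℝ) ≤ 2 ^ (n + 1) := by
      calc (2:ℝ) = 2 ^ 1 := by norm_num
      _ ≤ 2 ^ (n + 1) := pow_le_pow_right₀ one_le_two (by omega)
    nlinarith
  have key := MeasureTheory.integral_tsum_of_summable_integral_norm
    (μ := volume.restrict (Set.Ioi (0:ℝ)))
    (F := fun (n : ℕ) (x : ℝ) => mitCoef n * Real.exp (-(2 ^ (n + 1) * r * x)))
    (fun n => mitTerm_integrable r hr n) hsum
  have hL : ∫ x in Set.Ioi (0:ℝ), mitDensity r x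
      = ∑' n : ℕ, ∫ x in Set.Ioi (0:ℝ), mitCoef n * Real.exp (-(2 ^ (n + 1) * r * x)) :=
    key.symm
  rw [hL]
  have hterm : ∀ n : ℕ, (∫ x in Set.Ioi (0:ℝ), mitCoef n * Real.exp (-(2 ^ (n + 1) * r * x)))
      = 1 / (2 * r) * (mitCoef n * ((1:ℝ) / 2) ^ n) := by
    intro n
    rw [mitTerm_integral r hr n]
    have h2 : ((1:ℝ) / 2) ^ n = ((2:ℝ) ^ n)⁻¹ := by rw [one_div, inv_pow]
    rw [h2, pow_succ, mul_inv, mul_inv, one_div, mul_inv]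
    ring
  rw [tsum_congr hterm, tsum_mul_left, mitA]

lemma integral_eq_of_vanish {g : ℝ → ℝ} {t : Set ℝ} (ht : MeasurableSet t)
    (h : ∀ x, x ∉ t → g x = 0) : ∫ x in t, g x = ∫ x, g x := by
  rw [← MeasureTheory.integral_indicator ht]
  congr 1
  funext x
  by_cases hx : x ∈ t
  · rw [Set.indicator_of_mem hx]
  · rw [Set.indicator_of_notMem hx, h x hx]

/-- **Explicit invariant density of the TCP process with constant rate `r`.**
The series defining `p` converges absolutely on `[0,∞)`; `p` is differentiable on
`(0,∞)` with `p'(x) = 4r p(2x) − 2r p(x)`; `p ≥ 0`; `∫₀^∞ p = (1/(2r)) ∏ₙ(1 − 2^{−n})`;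
hence `φ = (2r/∏ₙ(1 − 2^{−n})) p` is a probability density on `(0,∞)`, and
`∫₀^∞ [f'(x) + 2r(f(x/2) − f(x))] φ(x) dx = 0` for every `C¹` function `f` with compact
support contained in `(0,∞)`. -/
theorem tcp_invariant_density (r : ℝ) (hr : 0 < r) :
    (∀ x ≥ (0 : ℝ),
      Summable fun n : ℕ => |mitCoef n * Real.exp (-(2 ^ (n + 1) * r * x))|) ∧
    (∀ x > (0 : ℝ),
      HasDerivAt (mitDensity r) (4 * r * mitDensity r (2 * x) - 2 * r * mitDensity r x) x) ∧
    (∀ x ≥ (0 : ℝ), 0 ≤ mitDensity r x) ∧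
    (∫ x in Set.Ioi (0 : ℝ), mitDensity r x
        = 1 / (2 * r) * ∏' n : ℕ, (1 - (2 : ℝ)⁻¹ ^ (n + 1))) ∧
    (∀ x ≥ (0 : ℝ),
      0 ≤ (2 * r / ∏' n : ℕ, (1 - (2 : ℝ)⁻¹ ^ (n + 1))) * mitDensity r x) ∧
    (∫ x in Set.Ioi (0 : ℝ),
        (2 * r / ∏' n : ℕ, (1 - (2 : ℝ)⁻¹ ^ (n + 1))) * mitDensity r x = 1) ∧
    (∀ f : ℝ → ℝ, ContDiff ℝ 1 f → HasCompactSupport f → tsupport f ⊆ Set.Ioi 0 →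
      ∫ x in Set.Ioi (0 : ℝ),
          (deriv f x + 2 * r * (f (x / 2) - f x)) *
            ((2 * r / ∏' n : ℕ, (1 - (2 : ℝ)⁻¹ ^ (n + 1))) * mitDensity r x) = 0) := by
  have hPpos := tprod_mit_pos
  set P : ℝ := ∏' n : ℕ, (1 - (2 : ℝ)⁻¹ ^ (n + 1)) with hPdef
  have c1 : ∀ x ≥ (0:ℝ),
      Summable fun n : ℕ => |mitCoef n * Real.exp (-(2 ^ (n + 1) * r * x))| := by
    intro x hx
    apply Summable.of_nonneg_of_le (fun n => abs_nonneg _) (fun n => ?_) summable_abs_mitCoef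
    rw [abs_mul, abs_of_pos (Real.exp_pos _)]
    calc |mitCoef n| * Real.exp (-(2 ^ (n + 1) * r * x)) ≤ |mitCoef n| * 1 := by
          apply mul_le_mul_of_nonneg_left _ (abs_nonneg _)
          rw [Real.exp_le_one_iff]
          have h0 : (0:ℝ) ≤ 2 ^ (n + 1) * r * x := by positivity
          linarith
      _ = |mitCoef n| := mul_one _
  have c2 : ∀ x > (0:ℝ), HasDerivAt (mitDensity r)
      (4 * r * mitDensity r (2 * x) - 2 * r * mitDensity r x) x :=
    fun x hx => mitDensity_hasDerivAt hr hx
  have c3 : ∀ x ≥ (0:ℝ), 0 ≤ mitDensity r x := fun x hx => mitDensity_nonneg hr hx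
  have c4 : ∫ x in Set.Ioi (0:ℝ), mitDensity r x = 1 / (2 * r) * P := by
    rw [mitDensity_integral r hr, hPdef, tprod_eq_mitA_one]
  have c5 : ∀ x ≥ (0:ℝ), 0 ≤ (2 * r / P) * mitDensity r x := fun x hx =>
    mul_nonneg (div_nonneg (by linarith) hPpos.le) (c3 x hx)
  have c6 : ∫ x in Set.Ioi (0:ℝ), (2 * r / P) * mitDensity r x = 1 := by
    rw [MeasureTheory.integral_const_mul, c4]
    field_simp
  refine ⟨c1, c2, c3, c4, c5, c6, ?_⟩
  intro f hf hfc hfs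
  by_cases hK : tsupport f = ∅
  · have hf0 : ∀ x, f x = 0 := fun x =>
      image_eq_zero_of_notMem_tsupport (by rw [hK]; exact Set.notMem_empty x)
    have hd0 : ∀ x, deriv f x = 0 := by
      intro x
      by_contra hne0
      have := support_deriv_subset (Function.mem_support.2 hne0)
      rw [hK] at this
      exact Set.notMem_empty x this
    simp only [hf0, hd0, sub_self, mul_zero, add_zero, zero_mul, zero_add]
    simp
  · have hne : (tsupport f).Nonempty := Set.nonempty_iff_ne_empty.2 hK
    have hKcpt : IsCompact (tsupport f) := hfc
    set a := sInf (tsupport f) with ha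
    set b := sSup (tsupport f) with hb
    have haK : a ∈ tsupport f := hKcpt.sInf_mem hne
    have hbK : b ∈ tsupport f := hKcpt.sSup_mem hne
    have ha0 : 0 < a := hfs haK
    have hb0 : 0 < b := hfs hbK
    have hab : a ≤ b := csInf_le hKcpt.bddBelow hbK
    have hsubK : tsupport f ⊆ Set.Icc a b := fun x hx =>
      ⟨csInf_le hKcpt.bddBelow hx, le_csSup hKcpt.bddAbove hx⟩
    have hfzero : ∀ x, x ∉ Set.Icc a b → f x = 0 := fun x hx =>
      image_eq_zero_of_notMem_tsupport (fun hmem => hx (hsubK hmem))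
    have hdzero : ∀ x, x ∉ Set.Icc a b → deriv f x = 0 := by
      intro x hx
      by_contra hne0
      exact hx (hsubK (support_deriv_subset (Function.mem_support.2 hne0)))
    have hIccsub : Set.Icc a b ⊆ Set.Icc a (2 * b) :=
      Set.Icc_subset_Icc_right (by linarith)
    have hg1v : ∀ x, x ∉ Set.Icc a (2 * b) → deriv f x * mitDensity r x = 0 :=
      fun x hx => by rw [hdzero x (fun h => hx (hIccsub h)), zero_mul]
    have hg2v : ∀ x, x ∉ Set.Icc a (2 * b) → f (x / 2) * mitDensity r x = 0 := by
      intro x hx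
      rw [hfzero (x / 2), zero_mul]
      rintro ⟨h1, h2⟩
      exact hx ⟨by linarith, by linarith⟩
    have hg3v : ∀ x, x ∉ Set.Icc a (2 * b) → f x * mitDensity r x = 0 :=
      fun x hx => by rw [hfzero x (fun h => hx (hIccsub h)), zero_mul]
    have hg4v : ∀ x, x ∉ Set.Icc a (2 * b) → f x * mitDensity r (2 * x) = 0 :=
      fun x hx => by rw [hfzero x (fun h => hx (hIccsub h)), zero_mul]
    have hfC : Continuous f := hf.continuous
    have hf'C : Continuous (deriv f) := hf.continuous_deriv le_rfl
    have hpC : ContinuousOn (mitDensity r) (Set.Ioi 0) := fun x hx =>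
      (mitDensity_hasDerivAt hr hx).continuousAt.continuousWithinAt
    have hp2C : ContinuousOn (fun x => mitDensity r (2 * x)) (Set.Ioi 0) := by
      intro x hx
      have h2x : (0:ℝ) < 2 * x := by have := Set.mem_Ioi.mp hx; linarith
      exact ((mitDensity_hasDerivAt hr h2x).continuousAt.comp
        ((continuous_const.mul continuous_id).continuousAt)).continuousWithinAt
    have hIccIoi : Set.Icc a (2 * b) ⊆ Set.Ioi (0:ℝ) := fun x hx =>
      lt_of_lt_of_le ha0 hx.1
    have hIntOn : ∀ g : ℝ → ℝ, ContinuousOn g (Set.Ioi 0) →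
        (∀ x, x ∉ Set.Icc a (2 * b) → g x = 0) → IntegrableOn g (Set.Ioi 0) := by
      intro g hgc hg0
      have h1 : IntegrableOn g (Set.Icc a (2 * b)) :=
        (hgc.mono hIccIoi).integrableOn_compact isCompact_Icc
      have h2 : IntegrableOn g (Set.Ioi 0 \ Set.Icc a (2 * b)) := by
        apply (integrableOn_congr_fun (g := fun _ => (0:ℝ)) ?_ ?_).mpr
          (integrableOn_zero)
        · intro x hx; exact hg0 x hx.2
        · exact measurableSet_Ioi.diff measurableSet_Icc
      apply (h1.union h2).mono_set
      intro x hx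
      by_cases hxm : x ∈ Set.Icc a (2 * b)
      · exact Set.mem_union_left _ hxm
      · exact Set.mem_union_right _ ⟨hx, hxm⟩
    have hg1I : IntegrableOn (fun x => deriv f x * mitDensity r x) (Set.Ioi 0) :=
      hIntOn _ (hf'C.continuousOn.mul hpC) hg1v
    have hg2I : IntegrableOn (fun x => f (x / 2) * mitDensity r x) (Set.Ioi 0) :=
      hIntOn _ ((hfC.comp (continuous_id.div_const 2)).continuousOn.mul hpC) hg2v
    have hg3I : IntegrableOn (fun x => f x * mitDensity r x) (Set.Ioi 0) :=
      hIntOn _ (hfC.continuousOn.mul hpC) hg3v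
    have hg4I : IntegrableOn (fun x => f x * mitDensity r (2 * x)) (Set.Ioi 0) :=
      hIntOn _ (hfC.continuousOn.mul hp2C) hg4v
    set a' : ℝ := a / 2 with ha'
    set b' : ℝ := 2 * b + 1 with hb'
    have ha'0 : 0 < a' := half_pos ha0
    have ha'b' : a' ≤ b' := by rw [ha', hb']; linarith
    have hsubI : Set.Icc a (2 * b) ⊆ Set.Ioc a' b' := fun x hx =>
      ⟨lt_of_lt_of_le (by rw [ha']; linarith) hx.1, by rw [hb']; linarith [hx.2]⟩
    have hIoiInt : ∀ g : ℝ → ℝ, (∀ x, x ∉ Set.Icc a (2 * b) → g x = 0) →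
        (∫ x in Set.Ioi (0:ℝ), g x) = ∫ x in a'..b', g x := by
      intro g hg0
      have e1 : ∫ x in Set.Ioi (0:ℝ), g x = ∫ x, g x :=
        integral_eq_of_vanish measurableSet_Ioi
          (fun x hx => hg0 x (fun hm => hx (hIccIoi hm)))
      have e2 : ∫ x in Set.Ioc a' b', g x = ∫ x, g x :=
        integral_eq_of_vanish measurableSet_Ioc
          (fun x hx => hg0 x (fun hm => hx (hsubI hm)))
      rw [e1, intervalIntegral.integral_of_le ha'b', e2]
    have huIcc : Set.uIcc a' b' ⊆ Set.Ioi (0:ℝ) := by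
      rw [Set.uIcc_of_le ha'b']
      intro x hx
      exact lt_of_lt_of_le ha'0 hx.1
    have hIvInt : ∀ g : ℝ → ℝ, ContinuousOn g (Set.Ioi 0) →
        IntervalIntegrable g volume a' b' :=
      fun g hgc => (hgc.mono huIcc).intervalIntegrable
    have hg1Iv := hIvInt _ (hf'C.continuousOn.mul hpC)
    have hg3Iv := hIvInt _ (hfC.continuousOn.mul hpC)
    have hg4Iv := hIvInt _ (hfC.continuousOn.mul hp2C)
    have hrestC : ContinuousOn
        (fun x => f x * (4 * r * mitDensity r (2 * x) - 2 * r * mitDensity r x))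
        (Set.Ioi 0) :=
      hfC.continuousOn.mul ((continuousOn_const.mul hp2C).sub (continuousOn_const.mul hpC))
    have hrestIv := hIvInt _ hrestC
    have hfa' : f a' = 0 := by
      apply hfzero
      rintro ⟨h1, _⟩
      rw [ha'] at h1
      linarith
    have hfb' : f b' = 0 := by
      apply hfzero
      rintro ⟨_, h2⟩
      rw [hb'] at h2
      linarith
    have hFTC : ∫ x in a'..b',
        (deriv f x * mitDensity r x
          + f x * (4 * r * mitDensity r (2 * x) - 2 * r * mitDensity r x))
        = f b' * mitDensity r b' - f a' * mitDensity r a' := by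
      apply intervalIntegral.integral_eq_sub_of_hasDerivAt
        (f := fun y => f y * mitDensity r y)
        (f' := fun x => deriv f x * mitDensity r x
          + f x * (4 * r * mitDensity r (2 * x) - 2 * r * mitDensity r x))
      · intro x hx
        have hx0 : (0:ℝ) < x := Set.mem_Ioi.mp (huIcc hx)
        exact ((hf.differentiable one_ne_zero).differentiableAt.hasDerivAt).mul
          (mitDensity_hasDerivAt hr hx0)
      · exact hg1Iv.add hrestIv
    rw [hfa', hfb', zero_mul, zero_mul, sub_zero] at hFTC
    have hsplit2 : ∫ x in a'..b',
        (deriv f x * mitDensity r x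
          + f x * (4 * r * mitDensity r (2 * x) - 2 * r * mitDensity r x))
        = (∫ x in a'..b', deriv f x * mitDensity r x)
          + (4 * r * (∫ x in a'..b', f x * mitDensity r (2 * x))
            - 2 * r * (∫ x in a'..b', f x * mitDensity r x)) := by
      rw [intervalIntegral.integral_add (f := fun x => deriv f x * mitDensity r x) hg1Iv hrestIv]
      congr 1
      have heq : (fun x => f x * (4 * r * mitDensity r (2 * x) - 2 * r * mitDensity r x))
          = fun x => 4 * r * (f x * mitDensity r (2 * x)) - 2 * r * (f x * mitDensity r x) :=
        funext fun x => by ring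
      rw [heq, intervalIntegral.integral_sub (f := fun x => 4 * r * (f x * mitDensity r (2 * x)))
          (g := fun x => 2 * r * (f x * mitDensity r x)) ((hg4Iv.const_mul _)) ((hg3Iv.const_mul _)),
        intervalIntegral.integral_const_mul, intervalIntegral.integral_const_mul]
    have hI1 : (∫ x in a'..b', deriv f x * mitDensity r x)
        = 2 * r * (∫ x in a'..b', f x * mitDensity r x)
          - 4 * r * (∫ x in a'..b', f x * mitDensity r (2 * x)) := by
      rw [hsplit2] at hFTC
      linarith
    have hsubst : ∫ x in Set.Ioi (0:ℝ), f (x / 2) * mitDensity r x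
        = 2 * ∫ x in Set.Ioi (0:ℝ), f x * mitDensity r (2 * x) := by
      have h := integral_comp_mul_left_Ioi (fun y => f (y / 2) * mitDensity r y) 0
        (by norm_num : (0:ℝ) < 2)
      simp only [mul_zero, smul_eq_mul] at h
      have heq : (fun x : ℝ => f (2 * x / 2) * mitDensity r (2 * x))
          = fun x : ℝ => f x * mitDensity r (2 * x) :=
        funext fun x => by rw [show 2 * x / 2 = x by ring]
      rw [heq] at h
      rw [h]
      ring
    calc ∫ x in Set.Ioi (0:ℝ), (deriv f x + 2 * r * (f (x / 2) - f x))
            * ((2 * r / P) * mitDensity r x)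
        = ∫ x in Set.Ioi (0:ℝ), (2 * r / P)
            * (deriv f x * mitDensity r x + 2 * r * (f (x / 2) * mitDensity r x)
              - 2 * r * (f x * mitDensity r x)) := by
          congr 1
          funext x
          ring
      _ = (2 * r / P) * ∫ x in Set.Ioi (0:ℝ),
            (deriv f x * mitDensity r x + 2 * r * (f (x / 2) * mitDensity r x)
              - 2 * r * (f x * mitDensity r x)) := MeasureTheory.integral_const_mul _ _
      _ = (2 * r / P) * ((∫ x in Set.Ioi (0:ℝ), deriv f x * mitDensity r x)
            + 2 * r * (∫ x in Set.Ioi (0:ℝ), f (x / 2) * mitDensity r x)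
            - 2 * r * (∫ x in Set.Ioi (0:ℝ), f x * mitDensity r x)) := by
          have hg2I' : IntegrableOn (fun x => 2 * r * (f (x / 2) * mitDensity r x))
              (Set.Ioi (0:ℝ)) := hg2I.const_mul _
          have hg3I' : IntegrableOn (fun x => 2 * r * (f x * mitDensity r x))
              (Set.Ioi (0:ℝ)) := hg3I.const_mul _
          have hg12I : IntegrableOn
              (fun x => deriv f x * mitDensity r x + 2 * r * (f (x / 2) * mitDensity r x))
              (Set.Ioi (0:ℝ)) := hg1I.add hg2I'
          rw [MeasureTheory.integral_sub hg12I hg3I',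
            MeasureTheory.integral_add hg1I hg2I',
            MeasureTheory.integral_const_mul, MeasureTheory.integral_const_mul]
      _ = 0 := by
          rw [hsubst, hIoiInt _ hg1v, hIoiInt _ hg3v, hIoiInt _ hg4v, hI1]
          ring
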